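/- For a latent space (M, w_{1:∞}) with M rigid and each w_n injective, two deterministic location vectors x_{1:n} and y_{1:n} generate equal random-graph distributions graph_n(x_{1:n}) = graph_n(y_{1:n}) (in distribution) if and only if [x_{1:n}] = [y_{1:n}], i.e., there is an isometry of M carrying each x_i to y_i. -/

import Mathlib

open MeasureTheory

variable {M : Type*} [MetricSpace M]

/-- Two `n`-tuples of points of `M` are equivalent (write `[x] = [y]`) when some
isometry of `M` carries one to the other coordinatewise. -/
def TupleEquiv {n : ℕ} (x y : Fin n → M) : Prop :=
  ∃ φ : M ≃ᵢ M, ∀ i, φ (y i) = x i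

/-- A metric space is *rigid* when any two tuples with identical pairwise
distance matrices are related by a global isometry. -/
def Rigid (M : Type*) [MetricSpace M] : Prop :=
  ∀ (n : ℕ) (x y : Fin n → M),
    (∀ p q, dist (x p) (x q) = dist (y p) (y q)) → TupleEquiv x y

/-- The potential edges of a graph on `n` labeled vertices. -/
def Edges (n : ℕ) : Type := { e : Fin n × Fin n // e.1 < e.2 }

instance (n : ℕ) : Fintype (Edges n) := by unfold Edges; infer_instance

instance (n : ℕ) : DecidableEq (Edges n) := by unfold Edges; infer_instance

/-- `graphMeasure w x` is the distribution `graph_n(x_{1:n})` of a random graph on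
`n` labeled vertices located at `x : Fin n → M`: each edge `{i,j}` is present
independently with probability `w (dist (x i) (x j))`. -/
noncomputable def graphMeasure (w : ℝ → ℝ) (hw : ∀ t, w t ≤ 1) {n : ℕ}
    (x : Fin n → M) : Measure (Edges n → Bool) :=
  Measure.pi fun e =>
    (PMF.bernoulli (Real.toNNReal (w (dist (x e.1.1) (x e.1.2))))
      (Real.toNNReal_le_one.mpr (hw _))).toMeasure

lemma bernoulli_toMeasure_congr {p q : NNReal} (hp : p ≤ 1) (hq : q ≤ 1) (h : p = q) :
    (PMF.bernoulli p hp).toMeasure = (PMF.bernoulli q hq).toMeasure := by subst h; rfl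

/-- **Identifiability of node locations.**  For a latent space `(M, w)` with `M`
rigid and each link function `wₙ : [0,∞) → [0,1]` non-increasing and injective,
two deterministic location vectors generate the same random-graph distribution,
`graph_n(x_{1:n}) = graph_n(y_{1:n})`, if and only if `[x_{1:n}] = [y_{1:n}]`,
i.e. some isometry of `M` carries each `xᵢ` to `yᵢ`. -/
theorem graph_dist_eq_iff_isometry_class (M : Type*) [MetricSpace M]
    (hM : Rigid M) (w : ℕ → ℝ → ℝ)
    (hw01 : ∀ n t, w n t ∈ Set.Icc (0 : ℝ) 1)
    (hwinj : ∀ n, Set.InjOn (w n) (Set.Ici 0))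
    (hwanti : ∀ n, AntitoneOn (w n) (Set.Ici 0))
    (n : ℕ) (x y : Fin n → M) :
    graphMeasure (w n) (fun t => (hw01 n t).2) x
        = graphMeasure (w n) (fun t => (hw01 n t).2) y
      ↔ TupleEquiv x y := by
  constructor
  · intro h
    have key : ∀ p q : Fin n, p < q → dist (x p) (x q) = dist (y p) (y q) := by
      intro p q hpq
      set e : Edges n := ⟨(p, q), hpq⟩ with he
      have hmeas : ∀ (z : Fin n → M),
          graphMeasure (w n) (fun t => (hw01 n t).2) z
            (Set.pi Set.univ (fun e' => if e' = e then {true} else Set.univ))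
            = ENNReal.ofReal (w n (dist (z p) (z q))) := by
        intro z
        rw [graphMeasure, Measure.pi_pi]
        rw [Finset.prod_eq_single e]
        · rw [if_pos rfl, PMF.toMeasure_apply_singleton _ _ (measurableSet_singleton _)]
          rw [PMF.bernoulli_apply]; rfl
        · intro e' _ hne; rw [if_neg hne, measure_univ]
        · simp
      have hthis := hmeas x
      rw [h, hmeas y] at hthis
      have hw' : w n (dist (x p) (x q)) = w n (dist (y p) (y q)) := by
        rw [ENNReal.ofReal_eq_ofReal_iff (hw01 n _).1 (hw01 n _).1] at hthis
        exact hthis.symm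
      exact hwinj n dist_nonneg dist_nonneg hw'
    have hall : ∀ p q, dist (x p) (x q) = dist (y p) (y q) := by
      intro p q
      rcases lt_trichotomy p q with hpq | rfl | hqp
      · exact key p q hpq
      · simp
      · rw [dist_comm (x p), dist_comm (y p)]; exact key q p hqp
    exact hM n x y hall
  · rintro ⟨φ, hφ⟩
    have hd : ∀ p q, dist (x p) (x q) = dist (y p) (y q) := by
      intro p q; rw [← hφ p, ← hφ q, φ.dist_eq]
    unfold graphMeasure
    congr 1
    funext e
    exact bernoulli_toMeasure_congr _ _ (congrArg (fun d => Real.toNNReal (w n d)) (hd _ _))
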